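/- For every δ ∈ (0,1), every L ∈ ℕ, every environment ω ∈ Γ(L,δ) satisfying P_ω(τ(b_+) < τ(b_−)) ≥ 1/2, and every n ∈ ℕ with n ≥ e^{3δL}, one has P_ω(τ(b_+) ≤ 2n/3 and τ(b_+) < τ(b_−)) ≥ 1/2 − 6·L⁴·e^{−δL}, where b_± := T_b^±(L). -/

import Mathlib

open MeasureTheory ProbabilityTheory Filter

noncomputable section

/-- One-step transition probabilities of the one-dimensional RWRE in environment `ω`. -/
def step (ω : ℤ → ℝ) (x y : ℤ) : ℝ :=
  if y = x + 1 then ω x else if y = x - 1 then 1 - ω x else 0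

/-- `IsMarkovChain K z P` : `P` is the law of the Markov chain on `S` with one-step
transition probabilities `K` started (deterministically) at `z`, characterized through its
finite-dimensional (cylinder) probabilities. -/
def IsMarkovChain {S : Type*} [MeasurableSpace S] [DecidableEq S] (K : S → S → ℝ) (z : S)
    (P : Measure (ℕ → S)) : Prop :=
  IsProbabilityMeasure P ∧
    ∀ (n : ℕ) (path : ℕ → S),
      (P {X | ∀ i ≤ n, X i = path i}).toReal
        = (if path 0 = z then 1 else 0) * ∏ i ∈ Finset.range n, K (path i) (path (i + 1))

/-- `IsRWRE ω z P` : `P` is the quenched law `P_ω^z` of the RWRE in environment `ω`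
started at `z`. -/
def IsRWRE (ω : ℤ → ℝ) (z : ℤ) (P : Measure (ℕ → ℤ)) : Prop :=
  IsMarkovChain (step ω) z P

/-- `logρ ω i = log ρ_i`. -/
def logρ (ω : ℤ → ℝ) (i : ℤ) : ℝ := Real.log ((1 - ω i) / ω i)

/-- `IsRandomEnv ℙ ε env` : `env` is an i.i.d. random environment with values in `[ε, 1-ε]`,
with `𝔼[log ρ_0] = 0` and `Var(log ρ_0) > 0`. -/
structure IsRandomEnv {Ω : Type*} [MeasurableSpace Ω] (Pr : Measure Ω) (ε : ℝ)
    (env : Ω → ℤ → ℝ) : Prop where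
  isProb : IsProbabilityMeasure Pr
  meas : ∀ x : ℤ, Measurable fun θ => env θ x
  elliptic : ∀ᵐ θ ∂Pr, ∀ x : ℤ, env θ x ∈ Set.Icc ε (1 - ε)
  indep : iIndepFun (fun x θ => env θ x) Pr
  ident : ∀ x : ℤ, IdentDistrib (fun θ => env θ x) (fun θ => env θ 0) Pr Pr
  mean_zero : ∫ θ, logρ (env θ) 0 ∂Pr = 0
  var_pos : 0 < variance (fun θ => logρ (env θ) 0) Pr

/-- The potential `V` associated with the environment `ω`. -/
def pot (ω : ℤ → ℝ) (x : ℤ) : ℝ :=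
  if 0 ≤ x then ∑ i ∈ Finset.Icc 1 x, logρ ω i
  else -∑ i ∈ Finset.Icc (x + 1) 0, logρ ω i

/-- `min_{a ≤ y ≤ b} V(y)`. -/
def minV (ω : ℤ → ℝ) (a b : ℤ) : ℝ := sInf (pot ω '' Set.Icc a b)

/-- `max_{a ≤ y ≤ b} V(y)`. -/
def maxV (ω : ℤ → ℝ) (a b : ℤ) : ℝ := sSup (pot ω '' Set.Icc a b)

/-- `T^+(L)`. -/
def Tplus (ω : ℤ → ℝ) (L : ℝ) : ℤ :=
  sInf {z : ℤ | 0 ≤ z ∧ L ≤ pot ω z - minV ω 0 z}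

/-- `T^-(L)`. -/
def Tminus (ω : ℤ → ℝ) (L : ℝ) : ℤ :=
  sSup {z : ℤ | z ≤ 0 ∧ L ≤ pot ω z - minV ω z 0}

/-- `R_1^+(L)`. -/
def R1plus (ω : ℤ → ℝ) (L : ℝ) : ℝ := -minV ω 0 (Tplus ω L)

/-- `R_1^-(L)`. -/
def R1minus (ω : ℤ → ℝ) (L : ℝ) : ℝ := -minV ω (Tminus ω L) 0

/-- `T_b^+(L)`. -/
def Tbplus (ω : ℤ → ℝ) (L : ℝ) : ℤ :=
  sInf {z : ℤ | 0 ≤ z ∧ pot ω z = -R1plus ω L}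

/-- `T_b^-(L)`. -/
def Tbminus (ω : ℤ → ℝ) (L : ℝ) : ℤ :=
  sSup {z : ℤ | z ≤ 0 ∧ pot ω z = -R1minus ω L}

/-- `R_2^+(L)`. -/
def R2plus (ω : ℤ → ℝ) (L : ℝ) : ℝ := maxV ω 0 (Tbplus ω L)

/-- `R_2^-(L)`. -/
def R2minus (ω : ℤ → ℝ) (L : ℝ) : ℝ := maxV ω (Tbminus ω L) 0

/-- The set `Γ(L,δ)` of (elliptic) environments. -/
def Gamma (ε : ℝ) (L : ℕ) (δ : ℝ) : Set (ℤ → ℝ) :=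
  {ω | (∀ x : ℤ, ω x ∈ Set.Icc ε (1 - ε)) ∧
    R1plus ω L ≤ δ * L ∧ R1minus ω L ≤ δ * L ∧
    R2plus ω L ≤ δ * L ∧ R2minus ω L ≤ δ * L ∧
    Tplus ω L ≤ (L : ℤ) ^ 2 ∧ |Tminus ω L| ≤ (L : ℤ) ^ 2}

/-- The hitting time `τ(x)` of a site `x : ℤ` by a path, with value `⊤ = ∞` if the path
never visits `x`. -/
def hitTime (x : ℤ) (X : ℕ → ℤ) : ℕ∞ := sInf ((fun n : ℕ => (n : ℕ∞)) '' {n : ℕ | X n = x})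

/-- One-step transition probabilities of the RWRE reflected at `a` (from above) and at
`b` (from below). -/
def rstep (ω : ℤ → ℝ) (a b : ℤ) (x y : ℤ) : ℝ :=
  if x = a then (if y = a + 1 then 1 else 0)
  else if x = b then (if y = b - 1 then 1 else 0)
  else step ω x y

/-- Convergence in distribution of a sequence of laws on `ℝ`. -/
def TendstoInDistribution (μs : ℕ → Measure ℝ) (μ : Measure ℝ) : Prop :=
  ∀ f : BoundedContinuousFunction ℝ ℝ,
    Tendsto (fun n => ∫ x, f x ∂(μs n)) atTop (nhds (∫ x, f x ∂μ))

/-- `μ` is a (nondegenerate) `β`-stable law on `ℝ`. -/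
def IsStableLaw (β : ℝ) (μ : Measure ℝ) : Prop :=
  IsProbabilityMeasure μ ∧ (∀ x : ℝ, μ ≠ Measure.dirac x) ∧
    ∀ a b : ℝ, 0 < a → 0 < b → ∃ c : ℝ,
      (μ.map (fun x => a * x)).conv (μ.map (fun x => b * x))
        = μ.map (fun x => (a ^ β + b ^ β) ^ (1 / β) * x + c)

/-- `n`-fold additive convolution power of a measure on `ℤ` (law of `Z_1 + ⋯ + Z_n`). -/
def convPow (ν : Measure ℤ) : ℕ → Measure ℤ
  | 0 => Measure.dirac 0
  | n + 1 => (convPow ν n).conv ν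

/-- Transition probabilities of the model (II) on `ℤ²`. -/
def kernelII (δ : ℝ) (ω : ℤ → ℝ) (ν : Measure ℤ) (p q : ℤ × ℤ) : ℝ :=
  if q.1 = p.1 + 1 ∧ q.2 = p.2 then δ * ω p.1
  else if q.1 = p.1 - 1 ∧ q.2 = p.2 then δ * (1 - ω p.1)
  else if q.1 = p.1 then (1 - δ) * (ν {q.2 - p.2}).toReal
  else 0

/-- Transition probabilities of the model (III) (odd-even orientations) on `ℤ²`:
the vertical displacement from `(x,y)` to `(x,y+z)` has probability `(1-δ)·ν({(-1)^x z})`. -/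
def kernelIII (δ : ℝ) (ω : ℤ → ℝ) (ν : Measure ℤ) (p q : ℤ × ℤ) : ℝ :=
  if q.1 = p.1 + 1 ∧ q.2 = p.2 then δ * ω p.1
  else if q.1 = p.1 - 1 ∧ q.2 = p.2 then δ * (1 - ω p.1)
  else if q.1 = p.1 then
    (1 - δ) * (ν {if Even p.1 then q.2 - p.2 else p.2 - q.2}).toReal
  else 0

/-- A function `l` is slowly varying (at `+∞`). -/
def SlowlyVarying (l : ℝ → ℝ) : Prop :=
  (∀ᶠ x in atTop, 0 < l x) ∧
    ∀ c : ℝ, 0 < c → Tendsto (fun x => l (c * x) / l x) atTop (nhds 1)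


lemma pot_succ (ω : ℤ → ℝ) (x : ℤ) : pot ω (x + 1) = pot ω x + logρ ω (x + 1) := by
  unfold pot
  rcases le_or_gt 0 x with hx | hx
  · rw [if_pos hx, if_pos (by omega : (0:ℤ) ≤ x + 1)]
    rw [show Finset.Icc (1:ℤ) (x+1) = insert (x+1) (Finset.Icc 1 x) by
      ext z; simp [Finset.mem_Icc, Finset.mem_insert]; omega]
    rw [Finset.sum_insert (by simp)]
    ring
  · rcases eq_or_lt_of_le (by omega : x + 1 ≤ 0) with h0 | h0
    · have hx1 : x = -1 := by omega
      subst hx1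
      norm_num [logρ]
    · rw [if_neg (by omega), if_neg (by omega)]
      rw [show Finset.Icc (x+1) (0:ℤ) = insert (x+1) (Finset.Icc (x+2) 0) by
        ext z; simp [Finset.mem_Icc, Finset.mem_insert]; omega]
      rw [Finset.sum_insert (by simp)]
      rw [show x + 1 + 1 = x + 2 by ring]
      ring

section Walk

variable (ω : ℤ → ℝ) (bm bp : ℤ)

def rwD (y : ℤ) : ℝ := ∑ j ∈ Finset.Icc (y+1) bp, Real.exp (pot ω y - pot ω j) / ω j

def rwH (x : ℤ) : ℝ := ∑ y ∈ Finset.Ico bm x, rwD ω bp y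

variable {ω bm bp}

lemma exp_pot_pred (hell : ∀ x, 0 < ω x ∧ ω x < 1) (x : ℤ) :
    Real.exp (pot ω (x-1) - pot ω x) = ω x / (1 - ω x) := by
  have h0 := (hell x).1
  have h1 := (hell x).2
  have hpx : pot ω x = pot ω (x-1) + logρ ω x := by
    have := pot_succ ω (x-1)
    rw [show x - 1 + 1 = x by ring] at this
    exact this
  rw [hpx, show pot ω (x-1) - (pot ω (x-1) + logρ ω x) = -logρ ω x by ring,
    Real.exp_neg, logρ, Real.exp_log (div_pos (by linarith) h0)]
  rw [inv_div]

lemma rwD_nonneg (hell : ∀ x, 0 < ω x ∧ ω x < 1) (y : ℤ) : 0 ≤ rwD ω bp y :=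
  Finset.sum_nonneg fun j _ => div_nonneg (Real.exp_nonneg _) (hell j).1.le

lemma rwH_nonneg (hell : ∀ x, 0 < ω x ∧ ω x < 1) (x : ℤ) : 0 ≤ rwH ω bm bp x :=
  Finset.sum_nonneg fun y _ => rwD_nonneg hell y

lemma rwH_succ (h : bm ≤ x) : rwH ω bm bp (x+1) = rwH ω bm bp x + rwD ω bp x := by
  unfold rwH
  rw [show Finset.Ico bm (x+1) = insert x (Finset.Ico bm x) by
    ext z; simp [Finset.mem_Ico, Finset.mem_insert]; omega]
  rw [Finset.sum_insert (by simp)]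
  ring

lemma rwD_rec (hell : ∀ x, 0 < ω x ∧ ω x < 1) (h : x ≤ bp) :
    (1 - ω x) * rwD ω bp (x-1) = 1 + ω x * rwD ω bp x := by
  have h0 := (hell x).1
  have h1 := (hell x).2
  unfold rwD
  rw [show Finset.Icc (x-1+1) bp = insert x (Finset.Icc (x+1) bp) by
    ext z; simp [Finset.mem_Icc, Finset.mem_insert]; omega]
  rw [Finset.sum_insert (by simp)]
  rw [exp_pot_pred hell]
  have hterm : ∀ j ∈ Finset.Icc (x+1) bp,
      Real.exp (pot ω (x-1) - pot ω j) / ω j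
        = (ω x / (1 - ω x)) * (Real.exp (pot ω x - pot ω j) / ω j) := by
    intro j _
    rw [show pot ω (x-1) - pot ω j = (pot ω (x-1) - pot ω x) + (pot ω x - pot ω j) by ring,
      Real.exp_add, exp_pot_pred hell]
    ring
  rw [Finset.sum_congr rfl hterm, ← Finset.mul_sum]
  set S := ∑ j ∈ Finset.Icc (x+1) bp, Real.exp (pot ω x - pot ω j) / ω j with hS
  have hne : (1 : ℝ) - ω x ≠ 0 := by linarith
  have hne2 : ω x ≠ 0 := ne_of_gt h0
  rw [mul_add]
  have key : (1 - ω x) * (ω x / (1 - ω x) / ω x) = 1 := by field_simp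
  have key2 : (1 - ω x) * (ω x / (1 - ω x) * S) = ω x * S := by field_simp
  rw [key, key2]

lemma rwH_exact (hell : ∀ x, 0 < ω x ∧ ω x < 1) (h1 : bm < x) (h2 : x < bp) :
    ω x * rwH ω bm bp (x+1) + (1 - ω x) * rwH ω bm bp (x-1) = rwH ω bm bp x - 1 := by
  have e1 : rwH ω bm bp (x+1) = rwH ω bm bp x + rwD ω bp x := rwH_succ h1.le
  have e2 : rwH ω bm bp x = rwH ω bm bp (x-1) + rwD ω bp (x-1) := by
    have := rwH_succ (ω := ω) (bp := bp) (x := x - 1) (by omega : bm ≤ x - 1)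
    rw [show x - 1 + 1 = x by ring] at this
    exact this
  have e3 := rwD_rec hell h2.le
  have e2' : rwH ω bm bp (x-1) = rwH ω bm bp x - rwD ω bp (x-1) := by linarith
  rw [e1, e2']
  linear_combination -e3

lemma rwH_ge_one (hell : ∀ x, 0 < ω x ∧ ω x < 1) (h1 : bm < x) (h2 : x ≤ bp) :
    1 ≤ rwH ω bm bp x := by
  have h0 := (hell x).1
  have hlt1 := (hell x).2
  have hD : 1 ≤ rwD ω bp (x-1) := by
    have hx : x ∈ Finset.Icc x bp := by simp [h2]
    have hterm : (1:ℝ) ≤ Real.exp (pot ω (x-1) - pot ω x) / ω x := by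
      rw [exp_pot_pred hell, div_div, le_div_iff₀ (by nlinarith : (0:ℝ) < (1 - ω x) * ω x)]
      nlinarith
    calc (1:ℝ) ≤ Real.exp (pot ω (x-1) - pot ω x) / ω x := hterm
      _ ≤ ∑ j ∈ Finset.Icc (x-1+1) bp, Real.exp (pot ω (x-1) - pot ω j) / ω j := by
          rw [show x - 1 + 1 = x by ring]
          exact Finset.single_le_sum
            (f := fun j => Real.exp (pot ω (x-1) - pot ω j) / ω j)
            (fun j _ => div_nonneg (Real.exp_nonneg _) (hell j).1.le) hx
      _ = rwD ω bp (x-1) := rfl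
  calc (1:ℝ) ≤ rwD ω bp (x-1) := hD
    _ ≤ rwH ω bm bp x :=
        Finset.single_le_sum (fun y _ => rwD_nonneg hell y)
          (by simp [Finset.mem_Ico]; omega)
  
end Walk

section Chain

variable (ω : ℤ → ℝ) (bm bp : ℤ)

def rwU : ℕ → ℤ → ℝ
  | 0, x => if x ∈ Finset.Ioo bm bp then 1 else 0
  | (m+1), x => if x ∈ Finset.Ioo bm bp then
      ∑ y ∈ Finset.Ioo bm bp, step ω x y * rwU m y else 0

variable {ω bm bp}

lemma step_nonneg (hell : ∀ x, 0 < ω x ∧ ω x < 1) (x y : ℤ) : 0 ≤ step ω x y := by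
  unfold step
  split
  · exact (hell x).1.le
  · split
    · linarith [(hell x).2]
    · exact le_rfl

lemma sum_step_mul_le (hell : ∀ x, 0 < ω x ∧ ω x < 1) (x : ℤ) (f : ℤ → ℝ)
    (hf : ∀ y, 0 ≤ f y) :
    ∑ y ∈ Finset.Ioo bm bp, step ω x y * f y
      ≤ ω x * f (x+1) + (1 - ω x) * f (x-1) := by
  have h1 : ∑ y ∈ Finset.Ioo bm bp, step ω x y * f y
      = ∑ y ∈ Finset.Ioo bm bp ∩ {x-1, x+1}, step ω x y * f y := by
    refine (Finset.sum_subset Finset.inter_subset_left ?_).symm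
    intro y hy hny
    have hy' : y ≠ x + 1 ∧ y ≠ x - 1 := by
      simp only [Finset.mem_inter, Finset.mem_insert, Finset.mem_singleton] at hny
      constructor <;> intro h <;> exact hny ⟨hy, by omega⟩
    rw [step, if_neg hy'.1, if_neg hy'.2, zero_mul]
  rw [h1]
  have h2 : ∑ y ∈ Finset.Ioo bm bp ∩ {x-1, x+1}, step ω x y * f y
      ≤ ∑ y ∈ ({x-1, x+1} : Finset ℤ), step ω x y * f y :=
    Finset.sum_le_sum_of_subset_of_nonneg Finset.inter_subset_right
      (fun y _ _ => mul_nonneg (step_nonneg hell x y) (hf y))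
  refine h2.trans ?_
  rw [Finset.sum_pair (by omega : x - 1 ≠ x + 1)]
  have e1 : step ω x (x-1) = 1 - ω x := by rw [step, if_neg (by omega), if_pos rfl]
  have e2 : step ω x (x+1) = ω x := by rw [step, if_pos rfl]
  rw [e1, e2]
  linarith

lemma rwU_nonneg (hell : ∀ x, 0 < ω x ∧ ω x < 1) : ∀ m x, 0 ≤ rwU ω bm bp m x := by
  intro m
  induction m with
  | zero =>
    intro x; simp only [rwU]; split
    · exact zero_le_one
    · exact le_rfl
  | succ m IH =>
    intro x; simp only [rwU]; split
    · exact Finset.sum_nonneg fun y _ => mul_nonneg (step_nonneg hell x y) (IH y)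
    · exact le_rfl

lemma rwU_succ_le (hell : ∀ x, 0 < ω x ∧ ω x < 1) :
    ∀ m x, rwU ω bm bp (m+1) x ≤ rwU ω bm bp m x := by
  intro m
  induction m with
  | zero =>
    intro x
    by_cases hx : x ∈ Finset.Ioo bm bp
    · rw [show rwU ω bm bp 1 x = ∑ y ∈ Finset.Ioo bm bp, step ω x y * rwU ω bm bp 0 y from
        by rw [rwU, if_pos hx]]
      rw [show rwU ω bm bp 0 x = 1 from by rw [rwU, if_pos hx]]
      have h1 : ∑ y ∈ Finset.Ioo bm bp, step ω x y * rwU ω bm bp 0 y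
          ≤ ω x * rwU ω bm bp 0 (x+1) + (1 - ω x) * rwU ω bm bp 0 (x-1) :=
        sum_step_mul_le hell x _ (rwU_nonneg hell 0)
      have h2 : rwU ω bm bp 0 (x+1) ≤ 1 := by rw [rwU]; split <;> norm_num
      have h3 : rwU ω bm bp 0 (x-1) ≤ 1 := by rw [rwU]; split <;> norm_num
      have h4 := (hell x).1
      have h5 := (hell x).2
      nlinarith
    · rw [show rwU ω bm bp 1 x = 0 from by rw [rwU, if_neg hx],
        show rwU ω bm bp 0 x = 0 from by rw [rwU, if_neg hx]]
  | succ m IH =>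
    intro x
    simp only [rwU]
    split
    · exact Finset.sum_le_sum fun y _ =>
        mul_le_mul_of_nonneg_left (IH y) (step_nonneg hell x y)
    · exact le_rfl

lemma rwU_le_of_le (hell : ∀ x, 0 < ω x ∧ ω x < 1) {k m : ℕ} (h : k ≤ m) (x : ℤ) :
    rwU ω bm bp m x ≤ rwU ω bm bp k x := by
  induction h with
  | refl => exact le_rfl
  | step h IH => exact le_trans (rwU_succ_le hell _ x) IH

lemma rwU_sum_le (hell : ∀ x, 0 < ω x ∧ ω x < 1) :
    ∀ m x, ∑ k ∈ Finset.range (m+1), rwU ω bm bp k x ≤ rwH ω bm bp x := by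
  intro m
  induction m with
  | zero =>
    intro x
    rw [Finset.sum_range_one]
    simp only [rwU]
    split
    · rename_i hx
      rw [Finset.mem_Ioo] at hx
      exact rwH_ge_one hell hx.1 hx.2.le
    · exact rwH_nonneg hell x
  | succ m IH =>
    intro x
    rw [Finset.sum_range_succ']
    by_cases hx : x ∈ Finset.Ioo bm bp
    · have hx' := Finset.mem_Ioo.mp hx
      have hu : ∀ k, rwU ω bm bp (k+1) x
          = ∑ y ∈ Finset.Ioo bm bp, step ω x y * rwU ω bm bp k y := by
        intro k; simp only [rwU]; rw [if_pos hx]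
      have h0 : rwU ω bm bp 0 x = 1 := by simp only [rwU]; rw [if_pos hx]
      calc ∑ k ∈ Finset.range (m+1), rwU ω bm bp (k+1) x + rwU ω bm bp 0 x
          = ∑ y ∈ Finset.Ioo bm bp,
              step ω x y * ∑ k ∈ Finset.range (m+1), rwU ω bm bp k y + 1 := by
            rw [h0]
            congr 1
            rw [Finset.sum_congr rfl fun k _ => hu k, Finset.sum_comm]
            exact Finset.sum_congr rfl fun y _ => (Finset.mul_sum _ _ _).symm
        _ ≤ ω x * rwH ω bm bp (x+1) + (1 - ω x) * rwH ω bm bp (x-1) + 1 := by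
            have := sum_step_mul_le (bm := bm) (bp := bp) hell x (rwH ω bm bp) (rwH_nonneg hell)
            have hmono : ∑ y ∈ Finset.Ioo bm bp,
                step ω x y * ∑ k ∈ Finset.range (m+1), rwU ω bm bp k y
                ≤ ∑ y ∈ Finset.Ioo bm bp, step ω x y * rwH ω bm bp y :=
              Finset.sum_le_sum fun y _ =>
                mul_le_mul_of_nonneg_left (IH y) (step_nonneg hell x y)
            linarith
        _ = rwH ω bm bp x := by
            rw [rwH_exact hell hx'.1 hx'.2]; ring
    · have hz : ∀ k, rwU ω bm bp (k+1) x = 0 := by intro k; simp only [rwU]; rw [if_neg hx]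
      have h0 : rwU ω bm bp 0 x = 0 := by simp only [rwU]; rw [if_neg hx]
      rw [h0, Finset.sum_congr rfl fun k _ => hz k]
      simpa using rwH_nonneg hell x

lemma rwU_mul_le (hell : ∀ x, 0 < ω x ∧ ω x < 1) (m : ℕ) (x : ℤ) :
    ((m:ℝ)+1) * rwU ω bm bp m x ≤ rwH ω bm bp x := by
  have h1 : ((m:ℝ)+1) * rwU ω bm bp m x = ∑ k ∈ Finset.range (m+1), rwU ω bm bp m x := by
    rw [Finset.sum_const, Finset.card_range, nsmul_eq_mul]
    push_cast; ring
  rw [h1]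
  exact le_trans
    (Finset.sum_le_sum fun k hk =>
      rwU_le_of_le hell (Nat.lt_succ_iff.mp (Finset.mem_range.mp hk)) x)
    (rwU_sum_le hell m x)

end Chain

section PathSum

variable (ω : ℤ → ℝ) (bm bp : ℤ)

def rwW (m : ℕ) (v : Fin (m+1) → ℤ) : ℝ :=
  ∏ i : Fin m, step ω (v i.castSucc) (v i.succ)

def rwPS (m : ℕ) (x : ℤ) : ℝ :=
  ∑ v ∈ Fintype.piFinset (fun _ : Fin (m+1) => Finset.Ioo bm bp),
    if v 0 = x then rwW ω m v else 0

variable {ω bm bp}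

lemma sum_piFinset_cons {m : ℕ} (c : Finset ℤ) (F : (Fin (m+2) → ℤ) → ℝ) :
    ∑ v ∈ Fintype.piFinset (fun _ : Fin (m+2) => c), F v
      = ∑ p ∈ c ×ˢ Fintype.piFinset (fun _ : Fin (m+1) => c), F (Fin.cons p.1 p.2) := by
  refine Finset.sum_nbij' (fun v => (v 0, Fin.tail v)) (fun p => Fin.cons p.1 p.2)
    ?_ ?_ ?_ ?_ ?_
  · intro v hv
    rw [Fintype.mem_piFinset] at hv
    rw [Finset.mem_product]
    exact ⟨hv 0, Fintype.mem_piFinset.mpr fun i => hv i.succ⟩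
  · intro p hp
    rw [Finset.mem_product] at hp
    rw [Fintype.mem_piFinset]
    intro i
    refine Fin.cases ?_ ?_ i
    · rw [Fin.cons_zero]; exact hp.1
    · intro j; rw [Fin.cons_succ]; exact Fintype.mem_piFinset.mp hp.2 j
  · intro v _; simp
  · intro p _; simp
  · intro v _; dsimp only; rw [Fin.cons_self_tail]

lemma rwW_cons (m : ℕ) (y : ℤ) (w : Fin (m+1) → ℤ) :
    rwW ω (m+1) (Fin.cons y w) = step ω y (w 0) * rwW ω m w := by
  unfold rwW
  rw [Fin.prod_univ_succ]
  refine congrArg₂ (· * ·) ?_ (Finset.prod_congr rfl fun i _ => ?_)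
  · simp
  · have h1 : (Fin.cons y w : Fin (m+2) → ℤ) (i.succ.castSucc) = w i.castSucc := by
      rw [← Fin.succ_castSucc, Fin.cons_succ]
    have h2 : (Fin.cons y w : Fin (m+2) → ℤ) (i.succ.succ) = w i.succ := by
      rw [Fin.cons_succ]
    rw [h1, h2]

lemma rwPS_eq : ∀ (m : ℕ) (x : ℤ), rwPS ω bm bp m x = rwU ω bm bp m x := by
  intro m
  induction m with
  | zero =>
    intro x
    unfold rwPS
    rw [Finset.sum_nbij' (i := fun v : Fin 1 → ℤ => v 0)
      (j := fun (y : ℤ) => (fun _ : Fin 1 => y))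
      (t := Finset.Ioo bm bp)
      (g := fun y => if y = x then rwW ω 0 (fun _ => y) else 0)
      (fun v hv => Fintype.mem_piFinset.mp hv 0)
      (fun y hy => Fintype.mem_piFinset.mpr fun _ => hy)
      (fun v _ => funext fun i => by rw [Subsingleton.elim i 0])
      (fun y _ => rfl)
      (fun v hv => by
        have h : (fun _ : Fin 1 => v 0) = v := funext fun i => by rw [Subsingleton.elim i 0]
        rw [h])]
    rw [rwU]
    have hW : ∀ y : ℤ, rwW ω 0 (fun _ => y) = 1 := fun y => by
      unfold rwW; exact Finset.prod_of_isEmpty _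
    rw [Finset.sum_congr rfl fun y _ => by rw [hW y]]
    exact Finset.sum_ite_eq' (Finset.Ioo bm bp) x (fun _ => 1)
  | succ m IH =>
    intro x
    unfold rwPS
    rw [sum_piFinset_cons, Finset.sum_product]
    simp only [Fin.cons_zero, rwW_cons]
    have pull : ∀ y : ℤ,
        (∑ w ∈ Fintype.piFinset (fun _ : Fin (m+1) => Finset.Ioo bm bp),
          if y = x then step ω y (w 0) * rwW ω m w else 0)
        = if y = x then
            (∑ w ∈ Fintype.piFinset (fun _ : Fin (m+1) => Finset.Ioo bm bp),
              step ω y (w 0) * rwW ω m w) else 0 := by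
      intro y; split_ifs <;> simp
    rw [Finset.sum_congr rfl fun y _ => pull y]
    rw [Finset.sum_ite_eq' (Finset.Ioo bm bp) x _]
    rw [rwU]
    by_cases hx : x ∈ Finset.Ioo bm bp
    · rw [if_pos hx, if_pos hx]
      have h2 : ∀ w ∈ Fintype.piFinset (fun _ : Fin (m+1) => Finset.Ioo bm bp),
          step ω x (w 0) * rwW ω m w
          = ∑ z ∈ Finset.Ioo bm bp,
              (if w 0 = z then step ω x z * rwW ω m w else 0) := by
        intro w hw
        rw [Finset.sum_ite_eq (Finset.Ioo bm bp) (w 0)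
          (fun z => step ω x z * rwW ω m w), if_pos (Fintype.mem_piFinset.mp hw 0)]
      rw [Finset.sum_congr rfl h2, Finset.sum_comm]
      refine Finset.sum_congr rfl fun z _ => ?_
      rw [← IH z]
      unfold rwPS
      rw [Finset.mul_sum]
      refine Finset.sum_congr rfl fun w _ => ?_
      split <;> simp
    · rw [if_neg hx, if_neg hx]

end PathSum

section MainAux

/-- extension of a finite path to `ℕ` -/
def pext (m : ℕ) (v : Fin (m+1) → ℤ) : ℕ → ℤ :=
  fun j => v ⟨min j m, Nat.lt_succ_of_le (min_le_right j m)⟩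

lemma pot_zero (ω : ℤ → ℝ) : pot ω 0 = 0 := by
  rw [pot, if_pos le_rfl]
  norm_num

end MainAux

/-- Lower bound for the probability of reaching `b₊` before `b₋` within time `2n/3`. -/
theorem stmt15 (ε : ℝ) (hε : ε ∈ Set.Ioo 0 (1/2 : ℝ)) (δ : ℝ) (hδ : δ ∈ Set.Ioo 0 (1 : ℝ))
    (L : ℕ) (ω : ℤ → ℝ) (hω : ω ∈ Gamma ε L δ) (P : Measure (ℕ → ℤ)) (hP : IsRWRE ω 0 P)
    (hhalf : 1 / 2 ≤
      (P {X | hitTime (Tbplus ω (L : ℝ)) X < hitTime (Tbminus ω (L : ℝ)) X}).toReal)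
    (n : ℕ) (hn : Real.exp (3 * δ * L) ≤ (n : ℝ)) :
    1 / 2 - 6 * (L : ℝ) ^ 4 * Real.exp (-(δ * L))
      ≤ (P {X | 3 * hitTime (Tbplus ω (L : ℝ)) X ≤ ((2 * n : ℕ) : ℕ∞) ∧
          hitTime (Tbplus ω (L : ℝ)) X < hitTime (Tbminus ω (L : ℝ)) X}).toReal := by
  obtain ⟨hPprob, hcyl⟩ := hP
  haveI := hPprob
  obtain ⟨hellI, h1p, h1m, h2p, h2m, hTp, hTm⟩ := hω
  have hε0 : 0 < ε := hε.1
  have hε2 : ε < 1/2 := hε.2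
  have hell : ∀ x, 0 < ω x ∧ ω x < 1 := fun x =>
    ⟨lt_of_lt_of_le hε0 (hellI x).1, lt_of_le_of_lt (hellI x).2 (by linarith)⟩
  set bp := Tbplus ω (L:ℝ) with hbp_def
  set bm := Tbminus ω (L:ℝ) with hbm_def
  -- generic measure facts
  have hfin : ∀ s : Set (ℕ → ℤ), P s ≠ ⊤ := fun s => measure_ne_top P s
  have toReal0 : ∀ s : Set (ℕ → ℤ), (P s).toReal = 0 → P s = 0 := fun s h =>
    ((ENNReal.toReal_eq_zero_iff _).mp h).resolve_right (hfin s)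
  have hexpnn : (0:ℝ) ≤ 6 * (L:ℝ)^4 * Real.exp (-(δ * L)) := by positivity
  -- the never-starting-at-zero event is null
  have hX0 : P {X : ℕ → ℤ | X 0 ≠ 0} = 0 := by
    have hsub : {X : ℕ → ℤ | X 0 ≠ 0} ⊆
        ⋃ (z : {z : ℤ // z ≠ 0}), {X : ℕ → ℤ | ∀ i ≤ 0, X i = (fun _ => (z : ℤ)) i} := by
      intro X hX
      exact Set.mem_iUnion.mpr ⟨⟨X 0, hX⟩, fun i hi => by rw [Nat.le_zero.mp hi]⟩
    refine le_antisymm (le_trans (measure_mono hsub)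
      (le_trans (measure_iUnion_le _) ?_)) zero_le
    have hz : ∀ z : {z : ℤ // z ≠ 0},
        P {X : ℕ → ℤ | ∀ i ≤ 0, X i = (fun _ => (z : ℤ)) i} = 0 := by
      intro z
      apply toReal0
      have h := hcyl 0 (fun _ => (z : ℤ))
      rw [Finset.range_zero, Finset.prod_empty, mul_one, if_neg z.2] at h
      exact h
    exact le_of_eq (ENNReal.tsum_eq_zero.mpr hz)
  -- hitting time facts
  have hit_le : ∀ (x : ℤ) (X : ℕ → ℤ) (i : ℕ), X i = x → hitTime x X ≤ (i : ℕ∞) :=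
    fun x X i h => sInf_le ⟨i, h, rfl⟩
  have hit0 : ∀ (x : ℤ) (X : ℕ → ℤ), X 0 = x → hitTime x X = 0 := fun x X h =>
    le_antisymm (by simpa using hit_le x X 0 h) zero_le
  -- sign facts for bp, bm
  have hbp0 : 0 ≤ bp := by
    rw [hbp_def, Tbplus]
    rcases Set.eq_empty_or_nonempty {z : ℤ | 0 ≤ z ∧ pot ω z = -R1plus ω (L:ℝ)} with h | h
    · rw [h, Int.csInf_empty]
    · exact (Int.csInf_mem h ⟨0, fun z hz => hz.1⟩).1
  have hbm0 : bm ≤ 0 := by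
    rw [hbm_def, Tbminus]
    rcases Set.eq_empty_or_nonempty {z : ℤ | z ≤ 0 ∧ pot ω z = -R1minus ω (L:ℝ)} with h | h
    · rw [h, Int.csSup_empty]
    · exact (Int.csSup_mem h ⟨0, fun z hz => hz.1⟩).1
  rcases eq_or_lt_of_le hbm0 with hbm_eq | hbm_neg
  · -- case bm = 0 : contradiction with hhalf
    exfalso
    have hsubA : {X : ℕ → ℤ | hitTime bp X < hitTime bm X} ⊆ {X : ℕ → ℤ | X 0 ≠ 0} := by
      intro X hX
      intro h0
      have hbmX : hitTime bm X = 0 := hit0 bm X (by rw [h0, hbm_eq])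
      simp only [Set.mem_setOf_eq] at hX
      rw [hbmX] at hX
      simp at hX
    have h1 : (P {X : ℕ → ℤ | hitTime bp X < hitTime bm X}).toReal
        ≤ (P {X : ℕ → ℤ | X 0 ≠ 0}).toReal :=
      ENNReal.toReal_mono (hfin _) (measure_mono hsubA)
    rw [hX0] at h1
    simp at h1
    linarith
  rcases eq_or_lt_of_le hbp0 with hbp_eq | hbp_pos
  · -- case bp = 0 : the hitting time of bp is 0
    have hsubA : {X : ℕ → ℤ | hitTime bp X < hitTime bm X} ⊆
        {X | 3 * hitTime bp X ≤ ((2 * n : ℕ) : ℕ∞) ∧ hitTime bp X < hitTime bm X}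
          ∪ {X : ℕ → ℤ | X 0 ≠ 0} := by
      intro X hX
      by_cases h0 : X 0 = 0
      · left
        refine ⟨?_, hX⟩
        rw [hit0 bp X (by rw [h0, ← hbp_eq])]
        simp
      · right; exact h0
    have h1 : P {X : ℕ → ℤ | hitTime bp X < hitTime bm X}
        ≤ P {X | 3 * hitTime bp X ≤ ((2 * n : ℕ) : ℕ∞) ∧ hitTime bp X < hitTime bm X} := by
      refine le_trans (measure_mono hsubA) (le_trans (measure_union_le _ _) ?_)
      rw [hX0, add_zero]
    have h2 := ENNReal.toReal_mono (hfin _) h1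
    linarith
  -- MAIN CASE : bm < 0 < bp
  -- structure of Gamma on the positive side
  have hTplus_ne : {z : ℤ | 0 ≤ z ∧ (L:ℝ) ≤ pot ω z - minV ω 0 z}.Nonempty := by
    by_contra h
    rw [Set.not_nonempty_iff_eq_empty] at h
    have hT0 : Tplus ω (L:ℝ) = 0 := by rw [Tplus, h, Int.csInf_empty]
    have hmv : R1plus ω (L:ℝ) = 0 := by
      rw [R1plus, hT0, minV, Set.Icc_self, Set.image_singleton, csInf_singleton,
        pot_zero, neg_zero]
    have h0mem : (0:ℤ) ∈ {z : ℤ | 0 ≤ z ∧ pot ω z = -R1plus ω (L:ℝ)} :=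
      ⟨le_rfl, by rw [hmv, neg_zero, pot_zero]⟩
    have hle : bp ≤ 0 := by
      rw [hbp_def, Tbplus]
      exact csInf_le ⟨0, fun z hz => hz.1⟩ h0mem
    exact absurd hle (not_le.mpr hbp_pos)
  have hTmem : 0 ≤ Tplus ω (L:ℝ) ∧
      (L:ℝ) ≤ pot ω (Tplus ω (L:ℝ)) - minV ω 0 (Tplus ω (L:ℝ)) := by
    rw [Tplus]
    exact Int.csInf_mem hTplus_ne ⟨0, fun z hz => hz.1⟩
  set T := Tplus ω (L:ℝ) with hT_def
  have hIccfin : (pot ω '' Set.Icc (0:ℤ) T).Finite := (Set.finite_Icc _ _).image _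
  have hIccne : (pot ω '' Set.Icc (0:ℤ) T).Nonempty :=
    ⟨pot ω 0, 0, ⟨le_rfl, hTmem.1⟩, rfl⟩
  obtain ⟨y, hy, hypot⟩ : minV ω 0 T ∈ pot ω '' Set.Icc (0:ℤ) T := by
    rw [minV]; exact hIccne.csInf_mem hIccfin
  have hySp : y ∈ {z : ℤ | 0 ≤ z ∧ pot ω z = -R1plus ω (L:ℝ)} :=
    ⟨hy.1, by rw [R1plus, ← hT_def, neg_neg]; exact hypot⟩
  have hbp_mem : 0 ≤ bp ∧ pot ω bp = -R1plus ω (L:ℝ) := by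
    rw [hbp_def, Tbplus]
    exact Int.csInf_mem ⟨y, hySp⟩ ⟨0, fun z hz => hz.1⟩
  have hbp_le_y : bp ≤ y := by
    rw [hbp_def, Tbplus]
    exact csInf_le ⟨0, fun z hz => hz.1⟩ hySp
  have hbp_le_T : bp ≤ T := le_trans hbp_le_y hy.2
  have hbpL : bp ≤ (L:ℤ)^2 := le_trans hbp_le_T hTp
  have hpot_up : ∀ z, 0 ≤ z → z ≤ bp → -(δ*(L:ℝ)) ≤ pot ω z ∧ pot ω z ≤ δ*L := by
    intro z h0 hzbp
    constructor
    · have h1 : minV ω 0 T ≤ pot ω z := by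
        rw [minV]
        exact csInf_le hIccfin.bddBelow ⟨z, ⟨h0, le_trans hzbp hbp_le_T⟩, rfl⟩
      have h2 : R1plus ω (L:ℝ) ≤ δ*L := h1p
      rw [R1plus, ← hT_def] at h2
      linarith
    · have h1 : pot ω z ≤ maxV ω 0 bp := by
        rw [maxV]
        exact le_csSup ((Set.finite_Icc _ _).image _).bddAbove ⟨z, ⟨h0, hzbp⟩, rfl⟩
      have h2 : R2plus ω (L:ℝ) ≤ δ*L := h2p
      rw [R2plus, ← hbp_def] at h2
      linarith
  -- structure of Gamma on the negative side
  have hTminus_ne : {z : ℤ | z ≤ 0 ∧ (L:ℝ) ≤ pot ω z - minV ω z 0}.Nonempty := by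
    by_contra h
    rw [Set.not_nonempty_iff_eq_empty] at h
    have hT0 : Tminus ω (L:ℝ) = 0 := by rw [Tminus, h, Int.csSup_empty]
    have hmv : R1minus ω (L:ℝ) = 0 := by
      rw [R1minus, hT0, minV, Set.Icc_self, Set.image_singleton, csInf_singleton,
        pot_zero, neg_zero]
    have h0mem : (0:ℤ) ∈ {z : ℤ | z ≤ 0 ∧ pot ω z = -R1minus ω (L:ℝ)} :=
      ⟨le_rfl, by rw [hmv, neg_zero, pot_zero]⟩
    have hle : 0 ≤ bm := by
      rw [hbm_def, Tbminus]
      exact le_csSup ⟨0, fun z hz => hz.1⟩ h0mem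
    exact absurd hle (not_le.mpr hbm_neg)
  have hTmmem : Tminus ω (L:ℝ) ≤ 0 ∧
      (L:ℝ) ≤ pot ω (Tminus ω (L:ℝ)) - minV ω (Tminus ω (L:ℝ)) 0 := by
    rw [Tminus]
    exact Int.csSup_mem hTminus_ne ⟨0, fun z hz => hz.1⟩
  set T' := Tminus ω (L:ℝ) with hT'_def
  have hT'L : -((L:ℤ)^2) ≤ T' := by
    have := (abs_le.mp hTm).1
    linarith
  have hIccfin' : (pot ω '' Set.Icc T' 0).Finite := (Set.finite_Icc _ _).image _
  have hIccne' : (pot ω '' Set.Icc T' 0).Nonempty :=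
    ⟨pot ω 0, 0, ⟨hTmmem.1, le_rfl⟩, rfl⟩
  obtain ⟨y', hy', hypot'⟩ : minV ω T' 0 ∈ pot ω '' Set.Icc T' 0 := by
    rw [minV]; exact hIccne'.csInf_mem hIccfin'
  have hySm : y' ∈ {z : ℤ | z ≤ 0 ∧ pot ω z = -R1minus ω (L:ℝ)} :=
    ⟨hy'.2, by rw [R1minus, ← hT'_def, neg_neg]; exact hypot'⟩
  have hbm_mem : bm ≤ 0 ∧ pot ω bm = -R1minus ω (L:ℝ) := by
    rw [hbm_def, Tbminus]
    exact Int.csSup_mem ⟨y', hySm⟩ ⟨0, fun z hz => hz.1⟩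
  have hy_le_bm : y' ≤ bm := by
    rw [hbm_def, Tbminus]
    exact le_csSup ⟨0, fun z hz => hz.1⟩ hySm
  have hT_le_bm : T' ≤ bm := le_trans hy'.1 hy_le_bm
  have hbmL : -((L:ℤ)^2) ≤ bm := le_trans hT'L hT_le_bm
  have hpot_down : ∀ z, bm ≤ z → z ≤ 0 → -(δ*(L:ℝ)) ≤ pot ω z ∧ pot ω z ≤ δ*L := by
    intro z hbz hz0
    constructor
    · have h1 : minV ω T' 0 ≤ pot ω z := by
        rw [minV]
        exact csInf_le hIccfin'.bddBelow ⟨z, ⟨le_trans hT_le_bm hbz, hz0⟩, rfl⟩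
      have h2 : R1minus ω (L:ℝ) ≤ δ*L := h1m
      rw [R1minus, ← hT'_def] at h2
      linarith
    · have h1 : pot ω z ≤ maxV ω bm 0 := by
        rw [maxV]
        exact le_csSup ((Set.finite_Icc _ _).image _).bddAbove ⟨z, ⟨hbz, hz0⟩, rfl⟩
      have h2 : R2minus ω (L:ℝ) ≤ δ*L := h2m
      rw [R2minus, ← hbm_def] at h2
      linarith
  have hpotB : ∀ z, bm ≤ z → z ≤ bp → -(δ*(L:ℝ)) ≤ pot ω z ∧ pot ω z ≤ δ*L := by
    intro z h1 h2
    rcases le_or_gt z 0 with h | h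
    · exact hpot_down z h1 h
    · exact hpot_up z h.le h2
  -- the time threshold
  set M := 2 * n / 3 with hM_def
  have hM3 : 3 * M ≤ 2 * n := by omega
  have hM1 : 2 * n < 3 * (M + 1) := by omega
  -- bad events
  have hBad : ∀ i : ℕ, P {X : ℕ → ℤ | X (i+1) ≠ X i + 1 ∧ X (i+1) ≠ X i - 1} = 0 := by
    intro i
    have hsub : {X : ℕ → ℤ | X (i+1) ≠ X i + 1 ∧ X (i+1) ≠ X i - 1} ⊆
        ⋃ (v : {v : Fin (i+2) → ℤ //
            v ⟨i+1, by omega⟩ ≠ v ⟨i, by omega⟩ + 1 ∧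
            v ⟨i+1, by omega⟩ ≠ v ⟨i, by omega⟩ - 1}),
          {X : ℕ → ℤ | ∀ j ≤ i+1, X j = (v : Fin (i+2) → ℤ) ⟨min j (i+1), by omega⟩} := by
      intro X hX
      refine Set.mem_iUnion.mpr ⟨⟨fun j => X j.val, hX⟩, ?_⟩
      intro j hj
      show X j = X (min j (i+1))
      rw [min_eq_left hj]
    refine le_antisymm (le_trans (measure_mono hsub)
      (le_trans (measure_iUnion_le _) ?_)) zero_le
    have hz : ∀ v : {v : Fin (i+2) → ℤ //
        v ⟨i+1, by omega⟩ ≠ v ⟨i, by omega⟩ + 1 ∧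
        v ⟨i+1, by omega⟩ ≠ v ⟨i, by omega⟩ - 1},
        P {X : ℕ → ℤ | ∀ j ≤ i+1, X j = (v : Fin (i+2) → ℤ) ⟨min j (i+1), by omega⟩} = 0 := by
      intro v
      apply toReal0
      rw [hcyl (i+1) (fun j => (v : Fin (i+2) → ℤ) ⟨min j (i+1), by omega⟩)]
      have hzero : step ω ((v : Fin (i+2) → ℤ) ⟨min i (i+1), by omega⟩)
          ((v : Fin (i+2) → ℤ) ⟨min (i+1) (i+1), by omega⟩) = 0 := by
        have e1 : (⟨min i (i+1), by omega⟩ : Fin (i+2)) = ⟨i, by omega⟩ := by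
          ext; simp
        have e2 : (⟨min (i+1) (i+1), by omega⟩ : Fin (i+2)) = ⟨i+1, by omega⟩ := by
          ext; simp
        rw [e1, e2, step, if_neg v.2.1, if_neg v.2.2]
      rw [Finset.prod_eq_zero (Finset.mem_range.mpr (by omega : i < i+1)) hzero, mul_zero]
    exact le_of_eq (ENNReal.tsum_eq_zero.mpr hz)
  have hPN : P ({X : ℕ → ℤ | X 0 ≠ 0} ∪
      ⋃ i : ℕ, {X : ℕ → ℤ | X (i+1) ≠ X i + 1 ∧ X (i+1) ≠ X i - 1}) = 0 := by
    refine le_antisymm (le_trans (measure_union_le _ _) ?_) zero_le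
    rw [hX0, zero_add]
    refine le_trans (measure_iUnion_le _) ?_
    exact le_of_eq (ENNReal.tsum_eq_zero.mpr hBad)
  -- covering of the bad event by cylinders
  set B := {X : ℕ → ℤ | ¬ (3 * hitTime bp X ≤ ((2 * n : ℕ) : ℕ∞)) ∧
      hitTime bp X < hitTime bm X} with hB_def
  have havoid : ∀ X ∈ B, ∀ i ≤ M, X i ≠ bp ∧ X i ≠ bm := by
    intro X hX i hi
    obtain ⟨hB1, hB2⟩ := hX
    have hcontr : ∀ j : ℕ, j ≤ M → ¬ (hitTime bp X ≤ (j : ℕ∞)) := by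
      intro j hj hle
      apply hB1
      calc 3 * hitTime bp X ≤ 3 * (j : ℕ∞) := mul_le_mul_right hle 3
        _ = ((3 * j : ℕ) : ℕ∞) := by push_cast; ring
        _ ≤ ((2 * n : ℕ) : ℕ∞) := by exact_mod_cast (by omega : 3 * j ≤ 2 * n)
    constructor
    · intro h
      exact hcontr i hi (hit_le bp X i h)
    · intro h
      have h1 : hitTime bm X ≤ (i : ℕ∞) := hit_le bm X i h
      exact hcontr i hi (le_of_lt (lt_of_lt_of_le hB2 h1))
  have hcover : B \ ({X : ℕ → ℤ | X 0 ≠ 0} ∪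
      ⋃ i : ℕ, {X : ℕ → ℤ | X (i+1) ≠ X i + 1 ∧ X (i+1) ≠ X i - 1}) ⊆
      ⋃ v ∈ Fintype.piFinset (fun _ : Fin (M+1) => Finset.Ioo bm bp),
        {X : ℕ → ℤ | ∀ j ≤ M, X j = pext M v j} := by
    intro X hX
    obtain ⟨hXB, hXN⟩ := hX
    have hX0' : X 0 = 0 := by
      by_contra h
      exact hXN (Or.inl h)
    have hstep' : ∀ i : ℕ, X (i+1) = X i + 1 ∨ X (i+1) = X i - 1 := by
      intro i
      by_contra h
      push_neg at h
      exact hXN (Or.inr (Set.mem_iUnion.mpr ⟨i, h⟩))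
    have hin : ∀ i : ℕ, i ≤ M → bm < X i ∧ X i < bp := by
      intro i
      induction i with
      | zero =>
        intro _
        rw [hX0']
        exact ⟨hbm_neg, hbp_pos⟩
      | succ i IH =>
        intro hi
        have h1 := IH (by omega)
        have h2 := hstep' i
        have h3 := havoid X hXB (i+1) hi
        rcases h2 with h | h <;> rw [h] at h3 ⊢ <;> omega
    refine Set.mem_biUnion (Fintype.mem_piFinset.mpr fun i => Finset.mem_Ioo.mpr
      (hin i.val (Nat.lt_succ_iff.mp i.isLt))) ?_
    intro j hj
    show X j = X (min j M)
    rw [min_eq_left hj]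
  -- probability bound for the bad event
  have hPB : (P B).toReal ≤ rwU ω bm bp M 0 := by
    have hBsub : B ⊆ (B \ ({X : ℕ → ℤ | X 0 ≠ 0} ∪
        ⋃ i : ℕ, {X : ℕ → ℤ | X (i+1) ≠ X i + 1 ∧ X (i+1) ≠ X i - 1})) ∪
        ({X : ℕ → ℤ | X 0 ≠ 0} ∪
        ⋃ i : ℕ, {X : ℕ → ℤ | X (i+1) ≠ X i + 1 ∧ X (i+1) ≠ X i - 1}) := by
      intro X hX
      by_cases h : X ∈ ({X : ℕ → ℤ | X 0 ≠ 0} ∪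
        ⋃ i : ℕ, {X : ℕ → ℤ | X (i+1) ≠ X i + 1 ∧ X (i+1) ≠ X i - 1})
      · exact Or.inr h
      · exact Or.inl ⟨hX, h⟩
    have h1 : P B ≤ ∑ v ∈ Fintype.piFinset (fun _ : Fin (M+1) => Finset.Ioo bm bp),
        P {X : ℕ → ℤ | ∀ j ≤ M, X j = pext M v j} := by
      refine le_trans (measure_mono hBsub) (le_trans (measure_union_le _ _) ?_)
      rw [hPN, add_zero]
      exact le_trans (measure_mono hcover) (measure_biUnion_finset_le _ _)
    have h4 : (P B).toReal ≤ (∑ v ∈ Fintype.piFinset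
        (fun _ : Fin (M+1) => Finset.Ioo bm bp),
        P {X : ℕ → ℤ | ∀ j ≤ M, X j = pext M v j}).toReal :=
      ENNReal.toReal_mono (ENNReal.sum_ne_top.mpr fun v _ => hfin _) h1
    rw [ENNReal.toReal_sum (fun v _ => hfin _)] at h4
    refine h4.trans_eq ?_
    rw [← rwPS_eq M 0]
    unfold rwPS
    refine Finset.sum_congr rfl fun v _ => ?_
    rw [hcyl M (pext M v)]
    have h5 : pext M v 0 = v 0 := by
      show v _ = v 0
      congr 1
    have h6 : ∏ i ∈ Finset.range M, step ω (pext M v i) (pext M v (i+1)) = rwW ω M v := by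
      unfold rwW
      rw [← Fin.prod_univ_eq_prod_range (fun i => step ω (pext M v i) (pext M v (i+1))) M]
      refine Finset.prod_congr rfl fun i _ => ?_
      have e1 : pext M v i.val = v i.castSucc := by
        show v _ = v _
        congr 1
        exact Fin.ext (by simp [Nat.min_eq_left (le_of_lt i.isLt)])
      have e2 : pext M v (i.val + 1) = v i.succ := by
        show v _ = v _
        congr 1
        exact Fin.ext (by simp [Nat.min_eq_left i.isLt])
      rw [e1, e2]
    rw [h5, h6]
    split_ifs <;> simp
  -- analytic bound
  have hu := rwU_mul_le (bm := bm) (bp := bp) hell M 0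
  have hH0 : rwH ω bm bp 0 ≤ 4*(L:ℝ)^4 * Real.exp (2*(δ*L)) := by
    have hD : ∀ y ∈ Finset.Ico bm (0:ℤ),
        rwD ω bp y ≤ (2*(L:ℝ)^2) * (2 * Real.exp (2*(δ*L))) := by
      intro y hy
      rw [Finset.mem_Ico] at hy
      have hterm : ∀ j ∈ Finset.Icc (y+1) bp,
          Real.exp (pot ω y - pot ω j) / ω j ≤ 2 * Real.exp (2*(δ*(L:ℝ))) := by
        intro j hj
        rw [Finset.mem_Icc] at hj
        have hωj := hell j
        have hsplit : Real.exp (pot ω y - pot ω j) / ω j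
            = Real.exp (pot ω y - pot ω j) + Real.exp (pot ω y - pot ω (j-1)) := by
          have h1 : (ω j)⁻¹ = 1 + (1 - ω j)/ω j := by
            have hne : ω j ≠ 0 := hωj.1.ne'
            field_simp
            ring
          have h2 : pot ω j = pot ω (j-1) + logρ ω j := by
            have := pot_succ ω (j-1)
            rw [show j - 1 + 1 = j by ring] at this
            exact this
          rw [div_eq_mul_inv, h1, mul_add, mul_one,
            show (1 - ω j)/ω j = Real.exp (logρ ω j) from
              (Real.exp_log (div_pos (by linarith [hωj.2]) hωj.1)).symm,
            ← Real.exp_add]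
          congr 2
          rw [h2]
          ring
        rw [hsplit]
        have hyb : bm ≤ y := hy.1
        have hybp : y ≤ bp := by omega
        have hb1 : pot ω y ≤ δ*(L:ℝ) := (hpotB y hyb hybp).2
        have hb2 : -(δ*(L:ℝ)) ≤ pot ω j := (hpotB j (by omega) hj.2).1
        have hb3 : -(δ*(L:ℝ)) ≤ pot ω (j-1) := (hpotB (j-1) (by omega) (by omega)).1
        have e1 : Real.exp (pot ω y - pot ω j) ≤ Real.exp (2*(δ*(L:ℝ))) :=
          Real.exp_le_exp.mpr (by linarith)
        have e2 : Real.exp (pot ω y - pot ω (j-1)) ≤ Real.exp (2*(δ*(L:ℝ))) :=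
          Real.exp_le_exp.mpr (by linarith)
        linarith
      have hcard : (((Finset.Icc (y+1) bp).card : ℕ) : ℝ) ≤ 2*(L:ℝ)^2 := by
        rw [Int.card_Icc]
        have h1 : bp + 1 - (y+1) = bp - y := by ring
        rw [h1]
        have h4 : ((bp - y).toNat : ℤ) ≤ 2*(L:ℤ)^2 := by omega
        have h5 := (@Int.cast_le ℝ _ _ _).mpr h4
        push_cast at h5 ⊢
        linarith
      calc rwD ω bp y ≤ ∑ _j ∈ Finset.Icc (y+1) bp, 2 * Real.exp (2*(δ*(L:ℝ))) :=
            Finset.sum_le_sum hterm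
        _ = ((Finset.Icc (y+1) bp).card : ℝ) * (2 * Real.exp (2*(δ*(L:ℝ)))) := by
            rw [Finset.sum_const, nsmul_eq_mul]
        _ ≤ (2*(L:ℝ)^2) * (2 * Real.exp (2*(δ*(L:ℝ)))) :=
            mul_le_mul_of_nonneg_right hcard (by positivity)
    have hcard' : (((Finset.Ico bm (0:ℤ)).card : ℕ) : ℝ) ≤ (L:ℝ)^2 := by
      rw [Int.card_Ico]
      have h4 : ((0 - bm).toNat : ℤ) ≤ (L:ℤ)^2 := by omega
      have h5 := (@Int.cast_le ℝ _ _ _).mpr h4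
      push_cast at h5 ⊢
      linarith
    calc rwH ω bm bp 0 ≤ ∑ _y ∈ Finset.Ico bm (0:ℤ),
          (2*(L:ℝ)^2) * (2 * Real.exp (2*(δ*(L:ℝ)))) := Finset.sum_le_sum hD
      _ = ((Finset.Ico bm (0:ℤ)).card : ℝ) * ((2*(L:ℝ)^2) * (2 * Real.exp (2*(δ*(L:ℝ))))) := by
          rw [Finset.sum_const, nsmul_eq_mul]
      _ ≤ (L:ℝ)^2 * ((2*(L:ℝ)^2) * (2 * Real.exp (2*(δ*(L:ℝ))))) :=
          mul_le_mul_of_nonneg_right hcard' (by positivity)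
      _ = 4*(L:ℝ)^4 * Real.exp (2*(δ*(L:ℝ))) := by ring
  have hPBnum : (P B).toReal ≤ 6*(L:ℝ)^4*Real.exp (-(δ*(L:ℝ))) := by
    have hMpos : (0:ℝ) < (M:ℝ)+1 := by positivity
    have hu0 : rwU ω bm bp M 0 ≤ rwH ω bm bp 0 / ((M:ℝ)+1) := by
      rw [le_div_iff₀ hMpos]
      calc rwU ω bm bp M 0 * ((M:ℝ)+1) = ((M:ℝ)+1) * rwU ω bm bp M 0 := by ring
        _ ≤ rwH ω bm bp 0 := hu
    have hexp : Real.exp (2*(δ*(L:ℝ)))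
        = Real.exp (-(δ*(L:ℝ))) * Real.exp (3*(δ*(L:ℝ))) := by
      rw [← Real.exp_add]
      ring_nf
    have hn' : Real.exp (3*(δ*(L:ℝ))) ≤ (n:ℝ) := by
      rw [← mul_assoc]
      exact hn
    have h2n : 2 * Real.exp (3*(δ*(L:ℝ))) < 3*((M:ℝ)+1) := by
      have hc : ((2*n : ℕ) : ℝ) < ((3*(M+1) : ℕ) : ℝ) := by exact_mod_cast hM1
      push_cast at hc
      linarith
    have hkey : rwH ω bm bp 0 / ((M:ℝ)+1) ≤ 6*(L:ℝ)^4*Real.exp (-(δ*(L:ℝ))) := by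
      rw [div_le_iff₀ hMpos]
      have base : 4*Real.exp (3*(δ*(L:ℝ))) ≤ 6*((M:ℝ)+1) := by linarith
      have hnn : (0:ℝ) ≤ (L:ℝ)^4 * Real.exp (-(δ*(L:ℝ))) := by positivity
      calc rwH ω bm bp 0 ≤ 4*(L:ℝ)^4 * Real.exp (2*(δ*(L:ℝ))) := hH0
        _ = (L:ℝ)^4*Real.exp (-(δ*(L:ℝ))) * (4*Real.exp (3*(δ*(L:ℝ)))) := by
            rw [hexp]; ring
        _ ≤ (L:ℝ)^4*Real.exp (-(δ*(L:ℝ))) * (6*((M:ℝ)+1)) :=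
            mul_le_mul_of_nonneg_left base hnn
        _ = 6*(L:ℝ)^4*Real.exp (-(δ*(L:ℝ))) * ((M:ℝ)+1) := by ring
    linarith
  -- final combination
  have hsplit : {X : ℕ → ℤ | hitTime bp X < hitTime bm X} ⊆
      {X | 3 * hitTime bp X ≤ ((2 * n : ℕ) : ℕ∞) ∧ hitTime bp X < hitTime bm X} ∪ B := by
    intro X hX
    by_cases h : 3 * hitTime bp X ≤ ((2 * n : ℕ) : ℕ∞)
    · exact Or.inl ⟨h, hX⟩
    · exact Or.inr ⟨h, hX⟩
  have h1 : P {X : ℕ → ℤ | hitTime bp X < hitTime bm X}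
      ≤ P {X | 3 * hitTime bp X ≤ ((2 * n : ℕ) : ℕ∞) ∧ hitTime bp X < hitTime bm X} + P B :=
    le_trans (measure_mono hsplit) (measure_union_le _ _)
  have h2 : (P {X : ℕ → ℤ | hitTime bp X < hitTime bm X}).toReal
      ≤ (P {X | 3 * hitTime bp X ≤ ((2 * n : ℕ) : ℕ∞) ∧
          hitTime bp X < hitTime bm X}).toReal + (P B).toReal := by
    have h3 := ENNReal.toReal_mono (ENNReal.add_ne_top.mpr ⟨hfin _, hfin _⟩) h1
    rwa [ENNReal.toReal_add (hfin _) (hfin _)] at h3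
  linarith

end
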